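/- The function f(x) = 1/ln(1+x) is logarithmically completely monotonic on (0,∞); that is, with ln f(x) = -ln(ln(1+x)), one has (-1)^k · (d/dx)^k [ -ln(ln(1+x)) ] ≥ 0 for every x > 0 and every integer k ≥ 1. -/

import Mathlib

open Real MeasureTheory Set Filter Metric

noncomputable section LCM12

/-- coefficient polynomial: `(t+1)(t+2)⋯(t+k)` -/
def cc (k : ℕ) (t : ℝ) : ℝ := ∏ i ∈ Finset.range k, (t + 1 + i)

lemma cc_nonneg (k : ℕ) {t : ℝ} (ht : 0 ≤ t) : 0 ≤ cc k t :=
  Finset.prod_nonneg fun i _ => by positivity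

lemma cc_succ (k : ℕ) (t : ℝ) : cc (k+1) t = cc k t * (t + 1 + k) :=
  Finset.prod_range_succ _ _

lemma cc_continuous (k : ℕ) : Continuous (cc k) :=
  continuous_finset_prod _ fun i _ => by continuity

lemma cc_le (k : ℕ) {t : ℝ} (ht : 0 ≤ t) : cc k t ≤ (t + 1 + k) ^ k := by
  calc cc k t ≤ ∏ i ∈ Finset.range k, (t + 1 + k) := by
        apply Finset.prod_le_prod (fun i _ => by positivity)
        intro i hi
        have : (i : ℝ) ≤ k := by
          exact_mod_cast (Finset.mem_range.mp hi).le
        linarith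
    _ = (t + 1 + k) ^ k := by rw [Finset.prod_const, Finset.card_range]

lemma one_add_pow_le (n : ℕ) {t : ℝ} (ht : 0 ≤ t) :
    (1 + t) ^ n ≤ 2 ^ n * (1 + t ^ n) := by
  rcases le_total t 1 with h | h
  · have h1 : (1 + t) ^ n ≤ 2 ^ n := by
      apply pow_le_pow_left₀ (by linarith) (by linarith)
    have h2 : (0:ℝ) ≤ t ^ n := by positivity
    nlinarith [pow_pos (show (0:ℝ) < 2 by norm_num) n]
  · have h1 : (1 + t) ^ n ≤ (2 * t) ^ n := by
      apply pow_le_pow_left₀ (by linarith) (by linarith)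
    have h2 : (2 * t) ^ n = 2 ^ n * t ^ n := mul_pow _ _ _
    nlinarith [pow_pos (show (0:ℝ) < 2 by norm_num) n]

lemma integrable_one_add_pow_exp (n : ℕ) {b : ℝ} (hb : 0 < b) :
    IntegrableOn (fun t : ℝ => (1 + t) ^ n * exp (-b * t)) (Ioi 0) := by
  have hpow : IntegrableOn (fun t : ℝ => t ^ n * exp (-b * t)) (Ioi 0) := by
    have := integrableOn_rpow_mul_exp_neg_mul_rpow (p := 1) (s := n) (b := b)
      (lt_of_lt_of_le (by norm_num) (Nat.cast_nonneg n)) one_pos hb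
    apply this.congr_fun ?_ measurableSet_Ioi
    intro t ht
    simp only [Real.rpow_natCast, Real.rpow_one]
  have hexp : IntegrableOn (fun t : ℝ => exp (-b * t)) (Ioi 0) :=
    exp_neg_integrableOn_Ioi 0 hb
  have hsum : IntegrableOn
      (fun t : ℝ => 2 ^ n * (exp (-b * t) + t ^ n * exp (-b * t))) (Ioi 0) := by
    exact ((hexp.add hpow).const_mul _)
  apply hsum.mono' ?_ ?_
  · exact (Continuous.aestronglyMeasurable (by continuity)).restrict
  · filter_upwards [self_mem_ae_restrict measurableSet_Ioi] with t ht
    have ht0 : (0:ℝ) < t := ht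
    have h1 : (0:ℝ) < exp (-b * t) := exp_pos _
    rw [Real.norm_eq_abs, abs_of_nonneg (by positivity)]
    have := one_add_pow_le n ht0.le
    nlinarith [pow_nonneg ht0.le n]

/-- master integrability lemma: `f` polynomially bounded times exponential decay. -/
lemma integrable_master (k : ℕ) (a : ℝ) {b : ℝ} (hb : 0 < b) {f : ℝ → ℝ}
    (hf : ∀ t, 0 < t → |f t| ≤ (t + 1 + k) ^ (k + 1)) (hcont : Continuous f) :
    IntegrableOn (fun t : ℝ => f t * exp (-(t + a) * b)) (Ioi 0) := by
  have hg : IntegrableOn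
      (fun t : ℝ => ((1 + k : ℝ) ^ (k+1) * exp (-a * b)) * ((1 + t) ^ (k+1) * exp (-b * t)))
      (Ioi 0) := (integrable_one_add_pow_exp (k+1) hb).const_mul _
  apply hg.mono' ?_ ?_
  · exact (Continuous.aestronglyMeasurable
      (hcont.mul (Real.continuous_exp.comp (by continuity)))).restrict
  · filter_upwards [self_mem_ae_restrict measurableSet_Ioi] with t ht
    have ht0 : (0:ℝ) < t := ht
    have hb1 : t + 1 + k ≤ (1 + k) * (1 + t) := by
      have : (0:ℝ) ≤ (k : ℝ) * t := by positivity
      ring_nf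
      nlinarith
    have hb2 : (t + 1 + k) ^ (k+1) ≤ ((1+k:ℝ) * (1 + t)) ^ (k+1) :=
      pow_le_pow_left₀ (by positivity) hb1 _
    have hexp : exp (-(t + a) * b) = exp (-a * b) * exp (-b * t) := by
      rw [← Real.exp_add]; ring_nf
    rw [Real.norm_eq_abs, abs_mul, abs_of_nonneg (exp_pos _).le, hexp]
    calc |f t| * (exp (-a*b) * exp (-b*t))
        ≤ (t + 1 + k) ^ (k+1) * (exp (-a*b) * exp (-b*t)) := by
          apply mul_le_mul_of_nonneg_right (hf t ht0) (by positivity)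
      _ ≤ ((1+k:ℝ) * (1+t)) ^ (k+1) * (exp (-a*b) * exp (-b*t)) := by
          apply mul_le_mul_of_nonneg_right hb2 (by positivity)
      _ = (1 + k : ℝ) ^ (k+1) * exp (-a * b) * ((1 + t) ^ (k+1) * exp (-b * t)) := by
          rw [mul_pow]; ring


/-- the integral representation of the iterated derivatives -/
def FF (k : ℕ) (x : ℝ) : ℝ :=
  ∫ t in Ioi (0:ℝ), cc k t * exp (-(t + k + 1) * Real.log (1 + x))

lemma FF_nonneg (k : ℕ) (x : ℝ) : 0 ≤ FF k x := by
  apply setIntegral_nonneg measurableSet_Ioi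
  intro t ht
  exact mul_nonneg (cc_nonneg _ (le_of_lt ht)) (exp_pos _).le

lemma log_one_add_hasDerivAt {y : ℝ} (hy : 0 < 1 + y) :
    HasDerivAt (fun y : ℝ => Real.log (1 + y)) (1 / (1 + y)) y := by
  have h1 : HasDerivAt (fun y : ℝ => 1 + y) 1 y := (hasDerivAt_id y).const_add 1
  have := (Real.hasDerivAt_log hy.ne').comp y h1
  rw [one_div, ← mul_one (1 + y)⁻¹]
  exact this

lemma inner_hasDerivAt (s : ℝ) {y : ℝ} (hy : 0 < 1 + y) :
    HasDerivAt (fun y : ℝ => exp (-s * Real.log (1 + y)))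
      (exp (-s * Real.log (1 + y)) * (-s / (1 + y))) y := by
  have h3 : HasDerivAt (fun y : ℝ => -s * Real.log (1 + y)) (-s / (1 + y)) y := by
    have := (log_one_add_hasDerivAt hy).const_mul (-s)
    rw [div_eq_mul_one_div]
    exact this
  exact h3.exp

lemma exp_shift {y : ℝ} (hy : 0 < 1 + y) (s : ℝ) :
    exp (-s * Real.log (1 + y)) / (1 + y) = exp (-(s + 1) * Real.log (1 + y)) := by
  rw [div_eq_mul_inv, ← Real.exp_log hy, ← Real.exp_neg, ← Real.exp_add, Real.exp_log hy]
  ring_nf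

lemma FF_hasDerivAt (k : ℕ) {x : ℝ} (hx : 0 < x) :
    HasDerivAt (FF k) (-(FF (k + 1) x)) x := by
  have hx2 : (0:ℝ) < 1 + x/2 := by linarith
  have hx1 : (0:ℝ) < 1 + x := by linarith
  set L₀ := Real.log (1 + x/2) with hL₀
  have hb : 0 < L₀ := Real.log_pos (by linarith)
  have key := hasDerivAt_integral_of_dominated_loc_of_deriv_le
    (μ := volume.restrict (Ioi (0:ℝ))) (𝕜 := ℝ)
    (F := fun y t => cc k t * exp (-(t + k + 1) * Real.log (1 + y)))
    (F' := fun y t => cc k t *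
      (exp (-(t + k + 1) * Real.log (1 + y)) * (-(t + k + 1) / (1 + y))))
    (x₀ := x) (s := ball x (x/2))
    (bound := fun t => (cc k t * (t + 1 + k)) * exp (-(t + ((k:ℝ) + 1)) * L₀))
    (ball_mem_nhds x (half_pos hx)) ?_ ?_ ?_ ?_ ?_ ?_
  · obtain ⟨-, hd⟩ := key
    have heq : (fun t => cc k t *
        (exp (-(t + k + 1) * Real.log (1 + x)) * (-(t + k + 1) / (1 + x))))
        = fun t => -(cc (k+1) t * exp (-(t + (k+1:ℕ) + 1) * Real.log (1 + x))) := by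
      funext t
      have h1 : exp (-(t + k + 1) * Real.log (1 + x)) / (1 + x)
          = exp (-(t + (k+1:ℕ) + 1) * Real.log (1 + x)) := by
        rw [exp_shift hx1 (t + k + 1)]
        push_cast; ring_nf
      rw [cc_succ]
      rw [div_eq_mul_inv] at h1
      push_cast at h1 ⊢
      linear_combination (-(t + (k:ℝ) + 1) * cc k t) * h1
    rw [heq] at hd
    rw [MeasureTheory.integral_neg] at hd
    exact hd
  · refine Eventually.of_forall fun y => (Continuous.aestronglyMeasurable ?_).restrict
    exact (cc_continuous k).mul (Real.continuous_exp.comp (by continuity))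
  · have hL : 0 < Real.log (1 + x) := Real.log_pos (by linarith)
    have := integrable_master k ((k:ℝ) + 1) hL
      (f := cc k) ?_ (cc_continuous k)
    · apply this.congr_fun ?_ measurableSet_Ioi
      intro t ht
      ring_nf
    · intro t ht
      rw [abs_of_nonneg (cc_nonneg _ ht.le)]
      calc cc k t ≤ (t + 1 + k) ^ k := cc_le k ht.le
        _ ≤ (t + 1 + k) ^ (k + 1) := by
            apply pow_le_pow_right₀ (by push_cast; linarith) (Nat.le_succ k)
  · refine (Continuous.aestronglyMeasurable ?_).restrict
    refine (cc_continuous k).mul (((Real.continuous_exp.comp (by continuity)).mul ?_))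
    exact Continuous.div_const (by continuity) _
  · filter_upwards [self_mem_ae_restrict measurableSet_Ioi] with t ht
    intro y hy
    have ht0 : (0:ℝ) < t := ht
    have hy2 : x/2 < y := by
      have := abs_lt.mp (mem_ball_iff_norm.mp hy)
      linarith [this.1]
    have hy1 : (1:ℝ) + x/2 < 1 + y := by linarith
    have hLy : L₀ ≤ Real.log (1 + y) := Real.log_le_log hx2 hy1.le
    have hs : (0:ℝ) < t + k + 1 := by positivity
    have hexp : exp (-(t + k + 1) * Real.log (1 + y)) ≤ exp (-(t + ((k:ℝ) + 1)) * L₀) := by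
      apply Real.exp_le_exp.mpr
      have h1 : -(t + ((k:ℝ) + 1)) * L₀ = -(t + (k:ℝ) + 1) * L₀ := by ring
      rw [h1]
      have := mul_le_mul_of_nonneg_left hLy hs.le
      nlinarith
    rw [Real.norm_eq_abs, abs_mul, abs_of_nonneg (cc_nonneg _ ht0.le), abs_mul,
      abs_of_nonneg (exp_pos _).le, abs_div, abs_neg, abs_of_nonneg hs.le,
      abs_of_nonneg (by linarith : (0:ℝ) ≤ 1 + y)]
    have hdiv : (t + k + 1) / (1 + y) ≤ t + 1 + k := by
      rw [div_le_iff₀ (by linarith)]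
      nlinarith
    calc cc k t * (exp (-(t + k + 1) * Real.log (1 + y)) * ((t + k + 1) / (1 + y)))
        ≤ cc k t * (exp (-(t + ((k:ℝ) + 1)) * L₀) * (t + 1 + k)) := by
          apply mul_le_mul_of_nonneg_left ?_ (cc_nonneg _ ht0.le)
          apply mul_le_mul hexp hdiv (div_nonneg hs.le (by linarith)) (exp_pos _).le
      _ = cc k t * (t + 1 + k) * exp (-(t + ((k:ℝ) + 1)) * L₀) := by ring
  · apply integrable_master k ((k:ℝ) + 1) hb
      (f := fun t => cc k t * (t + 1 + k)) ?_ ?_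
    · intro t ht
      rw [abs_of_nonneg (mul_nonneg (cc_nonneg _ ht.le) (by positivity))]
      calc cc k t * (t + 1 + k) ≤ (t + 1 + k) ^ k * (t + 1 + k) :=
            mul_le_mul_of_nonneg_right (cc_le k ht.le) (by positivity)
        _ = (t + 1 + k) ^ (k + 1) := (pow_succ _ _).symm
    · exact (cc_continuous k).mul (by continuity)
  · filter_upwards [self_mem_ae_restrict measurableSet_Ioi] with t ht
    intro y hy
    have ht0 : (0:ℝ) < t := ht
    have hy2 : x/2 < y := by
      have := abs_lt.mp (mem_ball_iff_norm.mp hy)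
      linarith [this.1]
    have hy1 : (0:ℝ) < 1 + y := by linarith
    exact (inner_hasDerivAt (t + k + 1) hy1).const_mul (cc k t)

lemma formula : ∀ (k : ℕ) {x : ℝ}, 0 < x →
    iteratedDeriv (k + 1) (fun x : ℝ => -Real.log (Real.log (1 + x))) x
      = (-1:ℝ) ^ (k + 1) * FF k x := by
  intro k
  induction k with
  | zero =>
    intro x hx
    have hx1 : (0:ℝ) < 1 + x := by linarith
    have hL : 0 < Real.log (1 + x) := Real.log_pos (by linarith)
    rw [iteratedDeriv_one]
    have h2 := log_one_add_hasDerivAt hx1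
    have h3 : HasDerivAt (fun y : ℝ => Real.log (Real.log (1 + y)))
        ((Real.log (1 + x))⁻¹ * (1 / (1 + x))) x :=
      by have := (Real.hasDerivAt_log hL.ne').comp x h2; exact this
    have h4 : HasDerivAt (fun y : ℝ => -Real.log (Real.log (1 + y))) _ x := h3.neg
    rw [h4.deriv]
    have hFF : FF 0 x = exp (-Real.log (1 + x)) * (1 / Real.log (1 + x)) := by
      unfold FF
      have heq : (fun t : ℝ => cc 0 t * exp (-(t + (0:ℕ) + 1) * Real.log (1 + x)))
          = fun t : ℝ => exp (-Real.log (1 + x)) * exp (-(Real.log (1 + x) * t)) := by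
        funext t
        simp only [cc, Finset.range_zero, Finset.prod_empty, one_mul, Nat.cast_zero]
        rw [← Real.exp_add]
        ring_nf
      rw [heq, MeasureTheory.integral_const_mul]
      congr 1
      have := Real.integral_rpow_mul_exp_neg_mul_Ioi (a := 1) one_pos hL
      simpa using this
    rw [hFF, Real.exp_neg, Real.exp_log hx1]
    field_simp
    ring
  | succ k ih =>
    intro x hx
    rw [iteratedDeriv_succ]
    have hev : (iteratedDeriv (k + 1) (fun x : ℝ => -Real.log (Real.log (1 + x))))
        =ᶠ[nhds x] fun y => (-1:ℝ) ^ (k + 1) * FF k y := by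
      filter_upwards [Ioi_mem_nhds hx] with y hy
      exact ih hy
    rw [hev.deriv_eq]
    have hd : HasDerivAt (fun y => (-1:ℝ) ^ (k + 1) * FF k y)
        ((-1:ℝ) ^ (k + 1) * (-(FF (k + 1) x))) x :=
      (FF_hasDerivAt k hx).const_mul _
    rw [hd.deriv]
    rw [pow_succ]
    ring

end LCM12

/-- The function `f(x) = 1/ln(1+x)` is logarithmically completely monotonic on `(0,∞)`:
with `ln f(x) = -ln(ln(1+x))`, one has `(-1)^k (d/dx)^k [-ln(ln(1+x))] ≥ 0` for every
`x > 0` and every integer `k ≥ 1`. -/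
theorem stmt_12 :
    ∀ k : ℕ, 1 ≤ k → ∀ x : ℝ, 0 < x →
      0 ≤ (-1 : ℝ) ^ k *
        iteratedDeriv k (fun x : ℝ => -Real.log (Real.log (1 + x))) x := by
  intro k hk x hx
  obtain ⟨m, rfl⟩ : ∃ m, k = m + 1 := ⟨k - 1, (Nat.succ_pred_eq_of_pos hk).symm⟩
  rw [formula m hx, ← mul_assoc, ← pow_add]
  have hev : Even (m + 1 + (m + 1)) := ⟨m + 1, rfl⟩
  rw [hev.neg_one_pow, one_mul]
  exact FF_nonneg m x
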